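/- Let θ ∈ ℝ^n and suppose there exists φ ∈ ℝ such that Re(e^{iφ} e^{i(arg c_α + ⟨α,θ⟩)}) ≥ 0 for all α ∈ A but not all these quantities are zero (θ is in the complement of the lopsided coamoeba). If additionally θ is not in the closure of the lopsided coamoeba, then there exists φ' such that Re(e^{iφ'} e^{i(arg c_α + ⟨α,θ⟩)}) > 0 strictly for all α ∈ A. -/

import Mathlib

open Complex

noncomputable def stmt3E (w : ℝ) : ℂ := Complex.exp ((w : ℂ) * Complex.I)

lemma stmt3E_add (a b : ℝ) : stmt3E (a + b) = stmt3E a * stmt3E b := by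
  rw [stmt3E, stmt3E, stmt3E, ← Complex.exp_add]
  congr 1
  push_cast
  ring

lemma stmt3E_re (w : ℝ) : (stmt3E w).re = Real.cos w :=
  Complex.exp_ofReal_mul_I_re w

lemma stmt3E_im (w : ℝ) : (stmt3E w).im = Real.sin w :=
  Complex.exp_ofReal_mul_I_im w

lemma stmt3E_sq (w : ℝ) : (stmt3E w).re ^ 2 + (stmt3E w).im ^ 2 = 1 := by
  rw [stmt3E_re, stmt3E_im]
  exact Real.cos_sq_add_sin_sq w

lemma stmt3E_arg (w : ℝ) : stmt3E ((stmt3E w).arg) = stmt3E w := by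
  have h := Complex.norm_mul_exp_arg_mul_I (stmt3E w)
  have habs : ‖stmt3E w‖ = 1 := Complex.norm_exp_ofReal_mul_I w
  rw [habs] at h
  simpa [stmt3E] using h

lemma stmt3E_pi_div_two : stmt3E (Real.pi/2) = Complex.I := by
  rw [stmt3E, Complex.exp_mul_I]
  push_cast
  simp

lemma stmt3E_neg_pi_div_two : stmt3E (-(Real.pi/2)) = -Complex.I := by
  rw [stmt3E, Complex.exp_mul_I]
  push_cast
  simp

open Real in
lemma stmt3_core (x y s G η : ℝ) (hxy : x^2 + y^2 = 1) (hx : 0 ≤ x)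
    (hcs : x * Real.cos s ≤ y * Real.sin s)
    (hs0 : 0 < s) (hs4 : s ≤ π/4) (hsη : s < Real.sin η / 4)
    (hη0 : 0 < η) (hη2 : η ≤ π/2)
    (hG1 : η ≤ G) (hG2 : G ≤ π - η) :
    x * Real.cos G - y * Real.sin G < 0 := by
  have hpi := Real.pi_pos
  have hsinη : 0 < Real.sin η := Real.sin_pos_of_pos_of_lt_pi hη0 (by linarith)
  have hsπ2 : s < π/2 := by linarith
  have hcoss : 0 < Real.cos s := Real.cos_pos_of_mem_Ioo ⟨by linarith, hsπ2⟩
  have hsins : 0 < Real.sin s := Real.sin_pos_of_pos_of_lt_pi hs0 (by linarith)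
  have hy0 : 0 ≤ y := by nlinarith
  have hy1 : y ≤ 1 := by nlinarith
  have hsq : (x * Real.cos s)^2 ≤ (y * Real.sin s)^2 := by
    have h0 : 0 ≤ x * Real.cos s := by positivity
    nlinarith
  have hycos : Real.cos s ≤ y := by
    have hpyth := Real.sin_sq_add_cos_sq s
    nlinarith [sq_nonneg (y - Real.cos s), sq_nonneg (y + Real.cos s)]
  have hcoshalf : (1:ℝ)/2 ≤ Real.cos s := by
    have : Real.cos (π/4) ≤ Real.cos s :=
      Real.cos_le_cos_of_nonneg_of_le_pi hs0.le (by linarith) hs4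
    rw [Real.cos_pi_div_four] at this
    nlinarith [Real.sq_sqrt (by norm_num : (2:ℝ) ≥ 0), Real.sqrt_nonneg 2]
  have hsinG : Real.sin η ≤ Real.sin G := by
    rcases le_or_gt G (π/2) with h | h
    · exact Real.sin_le_sin_of_le_of_le_pi_div_two (by linarith) h hG1
    · rw [← Real.sin_pi_sub G]
      exact Real.sin_le_sin_of_le_of_le_pi_div_two (by linarith) (by linarith) (by linarith)
  have hxb : x ≤ 2 * Real.sin s := by
    have h1 : x * (1/2) ≤ x * Real.cos s := mul_le_mul_of_nonneg_left hcoshalf hx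
    have h2 : y * Real.sin s ≤ 1 * Real.sin s := mul_le_mul_of_nonneg_right hy1 hsins.le
    rw [one_mul] at h2
    linarith
  have hss : Real.sin s ≤ s := Real.sin_le hs0.le
  have hxlt : x < Real.sin η / 2 := by linarith
  have hyG : Real.sin η / 2 ≤ y * Real.sin G := by
    have := mul_le_mul (by linarith : (1:ℝ)/2 ≤ y) hsinG hsinη.le hy0
    linarith
  have hcG : x * Real.cos G ≤ x := by
    have := mul_le_mul_of_nonneg_left (Real.cos_le_one G) hx
    linarith
  linarith

set_option maxHeartbeats 1000000 in
/-- If `f⟨θ⟩` is contained in a closed half-plane with not all points on the boundary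
(θ is in the complement of the lopsided coamoeba), and moreover `θ` is not in the closure
of the lopsided coamoeba, then `f⟨θ⟩` is contained in an open half-plane. -/
theorem stmt3 (n : ℕ) (A : Finset (Fin n → ℤ)) (c : (Fin n → ℤ) → ℂ)
    (hc : ∀ α ∈ A, c α ≠ 0)
    (u : (Fin n → ℝ) → (Fin n → ℤ) → ℂ)
    (hu : ∀ θ α, u θ α =
      Complex.exp (((Complex.arg (c α) + ∑ j, (α j : ℝ) * θ j : ℝ) : ℂ) * Complex.I))
    (θ : Fin n → ℝ)
    (h1 : ∃ φ : ℝ, (∀ α ∈ A, 0 ≤ (Complex.exp ((φ : ℂ) * Complex.I) * u θ α).re) ∧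
          ∃ α ∈ A, 0 < (Complex.exp ((φ : ℂ) * Complex.I) * u θ α).re)
    (h2 : θ ∉ closure {θ' : Fin n → ℝ | ¬ ∃ φ : ℝ,
          (∀ α ∈ A, 0 ≤ (Complex.exp ((φ : ℂ) * Complex.I) * u θ' α).re) ∧
          ∃ α ∈ A, 0 < (Complex.exp ((φ : ℂ) * Complex.I) * u θ' α).re}) :
    ∃ φ' : ℝ, ∀ α ∈ A, 0 < (Complex.exp ((φ' : ℂ) * Complex.I) * u θ α).re := by
  classical
  have hpi := Real.pi_pos
  obtain ⟨φ₀, hφ₀, γ, hγA, hγpos⟩ := h1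
  have hAne : A.Nonempty := ⟨γ, hγA⟩
  have hre : ∀ (θ'' : Fin n → ℝ) (φ' : ℝ) (δ : Fin n → ℤ),
      (Complex.exp ((φ' : ℂ) * Complex.I) * u θ'' δ).re
        = (stmt3E (φ' + ((c δ).arg + ∑ j, (δ j : ℝ) * θ'' j))).re := by
    intro θ'' φ' δ
    rw [hu, stmt3E, ← Complex.exp_add]
    congr 2
    push_cast
    ring
  set r : (Fin n → ℤ) → ℝ := fun δ => (c δ).arg + ∑ j, (δ j : ℝ) * θ j with hrdef
  set ψ : (Fin n → ℤ) → ℝ := fun δ => (stmt3E (φ₀ + r δ)).arg with hψdef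
  have hEψ : ∀ δ, stmt3E (ψ δ) = stmt3E (φ₀ + r δ) := fun δ => stmt3E_arg _
  have hψIoc : ∀ δ, ψ δ ∈ Set.Ioc (-Real.pi) Real.pi := fun δ => Complex.arg_mem_Ioc _
  clear_value ψ r
  have hcosψ : ∀ δ ∈ A, 0 ≤ Real.cos (ψ δ) := by
    intro δ hδ
    have h := hφ₀ δ hδ
    rw [hre θ φ₀ δ] at h
    rw [← stmt3E_re, hEψ δ]
    simp only [hrdef]
    exact h
  have hψIcc : ∀ δ ∈ A, -(Real.pi/2) ≤ ψ δ ∧ ψ δ ≤ Real.pi/2 := by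
    intro δ hδ
    have h := hcosψ δ hδ
    have h1 := (hψIoc δ).1
    have h2 := (hψIoc δ).2
    constructor
    · by_contra hcon
      push_neg at hcon
      have hneg : Real.cos (-(ψ δ)) < 0 :=
        Real.cos_neg_of_pi_div_two_lt_of_lt (by linarith) (by linarith)
      rw [Real.cos_neg] at hneg
      linarith
    · by_contra hcon
      push_neg at hcon
      have hneg : Real.cos (ψ δ) < 0 :=
        Real.cos_neg_of_pi_div_two_lt_of_lt hcon (by linarith)
      linarith
  obtain ⟨α, hαA, hαmin⟩ := Finset.exists_min_image A ψ hAne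
  obtain ⟨β, hβA, hβmax⟩ := Finset.exists_max_image A ψ hAne
  by_cases hlt : ψ β - ψ α < Real.pi
  · -- the points span less than π : rotate to the middle
    refine ⟨φ₀ - (ψ α + ψ β)/2, ?_⟩
    intro δ hδ
    rw [hre θ (φ₀ - (ψ α + ψ β)/2) δ]
    have harg : φ₀ - (ψ α + ψ β)/2 + ((c δ).arg + ∑ j, (δ j : ℝ) * θ j)
        = (φ₀ + r δ) + (-((ψ α + ψ β)/2)) := by
      simp only [hrdef]
      ring
    rw [harg, stmt3E_add, ← hEψ δ, ← stmt3E_add, stmt3E_re]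
    apply Real.cos_pos_of_mem_Ioo
    have hψδ1 := hαmin δ hδ
    have hψδ2 := hβmax δ hδ
    constructor
    · linarith
    · linarith
  · -- antipodal pair exists; contradiction with h2
    exfalso
    push_neg at hlt
    obtain ⟨hα1, hα2⟩ := hψIcc α hαA
    obtain ⟨hβ1, hβ2⟩ := hψIcc β hβA
    have haval : ψ α = -(Real.pi/2) := by linarith
    have hbval : ψ β = Real.pi/2 := by linarith
    have hγcos : 0 < Real.cos (ψ γ) := by
      have h := hγpos
      rw [hre θ φ₀ γ] at h
      rw [← stmt3E_re, hEψ γ]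
      simp only [hrdef]
      exact h
    obtain ⟨hγ1, hγ2⟩ := hψIcc γ hγA
    have hγlt1 : -(Real.pi/2) < ψ γ := by
      rcases lt_or_eq_of_le hγ1 with h | h
      · exact h
      · exfalso
        rw [← h, Real.cos_neg, Real.cos_pi_div_two] at hγcos
        linarith
    have hγlt2 : ψ γ < Real.pi/2 := by
      rcases lt_or_eq_of_le hγ2 with h | h
      · exact h
      · exfalso
        rw [h, Real.cos_pi_div_two] at hγcos
        linarith
    set v : Fin n → ℝ := fun j => (β j : ℝ) - (α j : ℝ) with hv
    set m : (Fin n → ℤ) → ℝ := fun δ => ∑ j, (δ j : ℝ) * v j with hm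
    set d : ℝ := m β - m α with hd
    set e : ℝ := m γ - m α with he
    set g₀ : ℝ := ψ γ + Real.pi/2 with hg₀
    set η : ℝ := min g₀ (Real.pi - g₀) / 2 with hη
    clear_value v m d e g₀ η
    have hdpos : 0 < d := by
      have hsum : d = ∑ j, v j ^ 2 := by
        simp only [hd, hm, hv]
        rw [← Finset.sum_sub_distrib]
        apply Finset.sum_congr rfl
        intro j _
        ring
      rw [hsum]
      have hαβ : α ≠ β := by
        intro h
        rw [h, hbval] at haval
        linarith
      obtain ⟨j, hj⟩ : ∃ j, α j ≠ β j := by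
        by_contra hcon
        push_neg at hcon
        exact hαβ (funext hcon)
      apply Finset.sum_pos' (fun i _ => sq_nonneg _)
      refine ⟨j, Finset.mem_univ j, ?_⟩
      have hvj : v j ≠ 0 := by
        rw [hv]
        simp only
        intro h
        apply hj
        exact_mod_cast (sub_eq_zero.mp h).symm
      exact lt_of_le_of_ne (sq_nonneg _) (Ne.symm (pow_ne_zero 2 hvj))
    have hg₀pos : 0 < g₀ := by rw [hg₀]; linarith
    have hg₀lt : g₀ < Real.pi := by rw [hg₀]; linarith
    have hmin1 : min g₀ (Real.pi - g₀) ≤ g₀ := min_le_left _ _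
    have hmin2 : min g₀ (Real.pi - g₀) ≤ Real.pi - g₀ := min_le_right _ _
    have hη0 : 0 < η := by
      rw [hη]
      have := lt_min hg₀pos (by linarith : (0:ℝ) < Real.pi - g₀)
      linarith
    have hη2 : η ≤ Real.pi/2 := by rw [hη]; linarith
    have h2ηa : 2 * η ≤ g₀ := by rw [hη]; linarith
    have h2ηb : 2 * η ≤ Real.pi - g₀ := by rw [hη]; linarith
    have hsinη : 0 < Real.sin η := Real.sin_pos_of_pos_of_lt_pi hη0 (by linarith)
    -- the two key congruences
    have hEβα : stmt3E (r β - r α) = -1 := by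
      have h1 : stmt3E (r β - r α) * stmt3E (φ₀ + r α) = stmt3E (φ₀ + r β) := by
        rw [← stmt3E_add]
        congr 1
        ring
      rw [← hEψ α, ← hEψ β, haval, hbval, stmt3E_pi_div_two, stmt3E_neg_pi_div_two] at h1
      linear_combination Complex.I * h1 + (stmt3E (r β - r α) + 1) * Complex.I_sq
    have hEγα : stmt3E (r γ - r α) = stmt3E g₀ := by
      have h1 : stmt3E (r γ - r α) * stmt3E (φ₀ + r α) = stmt3E (φ₀ + r γ) := by
        rw [← stmt3E_add]
        congr 1
        ring
      rw [← hEψ α, ← hEψ γ, haval, stmt3E_neg_pi_div_two] at h1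
      have h2 : stmt3E g₀ = stmt3E (ψ γ) * Complex.I := by
        rw [hg₀, stmt3E_add, stmt3E_pi_div_two]
      rw [h2]
      linear_combination Complex.I * h1 + stmt3E (r γ - r α) * Complex.I_sq
    -- contradiction with h2 via closure
    apply h2
    rw [Metric.mem_closure_iff]
    intro ε hε
    set C : ℝ := 1 + ∑ j, |v j| with hC
    clear_value C
    have hCpos : 0 < C := by
      rw [hC]
      have : (0:ℝ) ≤ ∑ j, |v j| := Finset.sum_nonneg fun _ _ => abs_nonneg _
      linarith
    have hvC : ∀ j, |v j| ≤ C := by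
      intro j
      rw [hC]
      have := Finset.single_le_sum (f := fun j => |v j|) (fun i _ => abs_nonneg _)
        (Finset.mem_univ j)
      linarith
    set t : ℝ := min (min ((Real.pi/4)/d) (Real.sin η/(8*d))) (min (η/(1+|e|)) (ε/(2*C)))
      with ht
    clear_value t
    have htpos : 0 < t := by
      rw [ht]
      refine lt_min (lt_min ?_ ?_) (lt_min ?_ ?_)
      · exact div_pos (by positivity) hdpos
      · exact div_pos hsinη (by linarith)
      · exact div_pos hη0 (by positivity)
      · exact div_pos hε (by linarith)
    have hsle1 : t ≤ (Real.pi/4)/d := by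
      rw [ht]; exact le_trans (min_le_left _ _) (min_le_left _ _)
    have hsle2 : t ≤ Real.sin η/(8*d) := by
      rw [ht]; exact le_trans (min_le_left _ _) (min_le_right _ _)
    have hsle3 : t ≤ η/(1+|e|) := by
      rw [ht]; exact le_trans (min_le_right _ _) (min_le_left _ _)
    have hsle4 : t ≤ ε/(2*C) := by
      rw [ht]; exact le_trans (min_le_right _ _) (min_le_right _ _)
    set θ' : Fin n → ℝ := fun j => θ j + t * v j with hθ'
    clear_value θ'
    refine ⟨θ', ?_, ?_⟩
    · -- θ' belongs to the lopsided coamoeba (the "bad" set)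
      intro hcon
      obtain ⟨φ, hφall, -⟩ := hcon
      have hrθ' : ∀ δ : Fin n → ℤ, ((c δ).arg + ∑ j, (δ j : ℝ) * θ' j) = r δ + t * m δ := by
        intro δ
        have hsum : ∑ j, (δ j : ℝ) * θ' j
            = (∑ j, (δ j : ℝ) * θ j) + t * (∑ j, (δ j : ℝ) * v j) := by
          rw [Finset.mul_sum, ← Finset.sum_add_distrib]
          apply Finset.sum_congr rfl
          intro j _
          simp only [hθ']
          ring
        rw [hsum]
        simp only [hrdef, hm]
        ring
      set z : ℂ := stmt3E (φ + (r α + t * m α)) with hz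
      set s : ℝ := t * d with hs
      set G : ℝ := g₀ + t * e with hG
      clear_value z s G
      have hs0 : 0 < s := by rw [hs]; exact mul_pos htpos hdpos
      have hs4 : s ≤ Real.pi/4 := by
        rw [hs]
        calc t * d ≤ ((Real.pi/4)/d) * d := mul_le_mul_of_nonneg_right hsle1 hdpos.le
        _ = Real.pi/4 := by field_simp
      have hsη : s < Real.sin η / 4 := by
        rw [hs]
        have h8 : (Real.sin η/(8*d)) * d = Real.sin η / 8 := by
          field_simp
        calc t * d ≤ (Real.sin η/(8*d)) * d := mul_le_mul_of_nonneg_right hsle2 hdpos.le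
        _ = Real.sin η / 8 := h8
        _ < Real.sin η / 4 := by linarith
      have hte : |t * e| ≤ η := by
        have h1 : t * (1 + |e|) ≤ η := by
          rw [← le_div_iff₀ (by positivity : (0:ℝ) < 1 + |e|)]
          exact hsle3
        have h2 : |t * e| = t * |e| := by rw [abs_mul, abs_of_pos htpos]
        have h3 : t * (1 + |e|) = t + t * |e| := by ring
        linarith only [h1, h2, h3, htpos]
      have hG1 : η ≤ G := by
        rw [hG]
        have := abs_le.mp hte
        linarith
      have hG2 : G ≤ Real.pi - η := by
        rw [hG]
        have := abs_le.mp hte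
        linarith
      -- the three key points
      have hxA : 0 ≤ z.re := by
        have h := hφall α hαA
        rw [hre θ' φ α, hrθ' α] at h
        rw [hz]
        exact h
      have hβE : stmt3E (φ + (r β + t * m β)) = -(z * stmt3E s) := by
        have harg : φ + (r β + t * m β) = (φ + (r α + t * m α)) + (r β - r α) + s := by
          rw [hs, hd]
          ring
        rw [harg, stmt3E_add, stmt3E_add, hEβα, ← hz]
        ring
      have hγE : stmt3E (φ + (r γ + t * m γ)) = z * stmt3E G := by
        have harg : φ + (r γ + t * m γ) = (φ + (r α + t * m α)) + (r γ - r α) + t * e := by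
          rw [he]
          ring
        rw [harg, stmt3E_add, stmt3E_add, hEγα, ← hz, hG, stmt3E_add]
        ring
      have hβcond : z.re * Real.cos s ≤ z.im * Real.sin s := by
        have h := hφall β hβA
        rw [hre θ' φ β, hrθ' β, hβE] at h
        rw [Complex.neg_re, Complex.mul_re, stmt3E_re, stmt3E_im] at h
        linarith
      have hzsq : z.re ^ 2 + z.im ^ 2 = 1 := by
        rw [hz]
        exact stmt3E_sq _
      have hcore := stmt3_core z.re z.im s G η hzsq hxA hβcond hs0 hs4 hsη hη0 hη2 hG1 hG2
      have hγcond := hφall γ hγA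
      rw [hre θ' φ γ, hrθ' γ, hγE] at hγcond
      rw [Complex.mul_re, stmt3E_re, stmt3E_im] at hγcond
      linarith
    · -- distance estimate
      rw [dist_pi_lt_iff hε]
      intro j
      rw [Real.dist_eq]
      simp only [hθ']
      have h1 : |θ j - (θ j + t * v j)| = t * |v j| := by
        rw [show θ j - (θ j + t * v j) = -(t * v j) by ring, abs_neg, abs_mul, abs_of_pos htpos]
      rw [h1]
      have h2 : t * |v j| ≤ t * C := mul_le_mul_of_nonneg_left (hvC j) htpos.le
      have h3 : t * C ≤ (ε/(2*C)) * C := mul_le_mul_of_nonneg_right hsle4 hCpos.le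
      have h4 : (ε/(2*C)) * C = ε/2 := by field_simp
      linarith
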